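/- Let ψ ∈ Ω. (1) If for every α > 1 the limit lim_{t→∞} ψ(t^α)/ψ(t) exists and is finite, then lim_{t→∞} ψ(t·ψ(t))/ψ(t) = 1. (2) If lim_{t→∞} ψ(t·ψ(t))/ψ(t) = 1, then for every a > 1 one has lim_{t→∞} ψ(at)/ψ(t) = 1. -/

import Mathlib

open Filter Set Topology

/-- Growth lemma: a doubling bound `ψ(t²) ≤ C ψ(t)` for large `t` forces
`ψ(t) ≤ t^ε` eventually, for every `ε > 0`. -/
lemma psi_grow (ψ : ℝ → ℝ) (hmono : MonotoneOn ψ (Set.Ici 0))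
    (C T : ℝ) (hC : 1 ≤ C) (hT : 2 ≤ T) (hψT : 1 ≤ ψ T)
    (hdbl : ∀ t ≥ T, ψ (t ^ (2:ℕ)) ≤ C * ψ t)
    {ε : ℝ} (hε : 0 < ε) :
    ∀ᶠ t : ℝ in atTop, ψ t ≤ t ^ ε := by
  classical
  have hT0 : (0:ℝ) < T := by linarith
  have hT1 : (1:ℝ) ≤ T := by linarith
  have hCpos : (0:ℝ) < C := by linarith
  -- iterated doubling bound
  have hiter : ∀ n : ℕ, ψ (T ^ (2^n)) ≤ C ^ n * ψ T := by
    intro n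
    induction n with
    | zero => simp
    | succ n ih =>
      have h1 : T ^ (2^(n+1)) = (T ^ (2^n)) ^ (2:ℕ) := by
        rw [← pow_mul]
        ring_nf
      have h2 : T ≤ T ^ (2^n) := le_self_pow₀ hT1 (by positivity)
      calc ψ (T ^ (2^(n+1))) = ψ ((T ^ (2^n)) ^ (2:ℕ)) := by rw [h1]
        _ ≤ C * ψ (T ^ (2^n)) := hdbl _ h2
        _ ≤ C * (C ^ n * ψ T) := by
            exact mul_le_mul_of_nonneg_left ih hCpos.le
        _ = C ^ (n+1) * ψ T := by ring
  -- the key eventual inequality on exponents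
  set c1 := Real.log C with hc1
  set c2 := Real.log (ψ T) with hc2
  set c3 := ε * Real.log T with hc3
  have hc1nn : 0 ≤ c1 := Real.log_nonneg hC
  have hc2nn : 0 ≤ c2 := Real.log_nonneg hψT
  have hc3pos : 0 < c3 := mul_pos hε (Real.log_pos (by linarith))
  have hkey : ∀ᶠ n : ℕ in atTop, ((n:ℝ)+1) * c1 + c2 ≤ c3 * 2^n := by
    have hsum : Summable (fun n : ℕ => (n:ℝ)^1 * (2⁻¹:ℝ)^n) :=
      summable_pow_mul_geometric_of_norm_lt_one 1 (by rw [norm_inv]; norm_num)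
    have h0 : Tendsto (fun n : ℕ => (n:ℝ)^1 * (2⁻¹:ℝ)^n) atTop (𝓝 0) :=
      hsum.tendsto_atTop_zero
    have h1 : Tendsto (fun n : ℕ => (((n:ℝ)+1) * c1 + c2) * (2⁻¹:ℝ)^n) atTop (𝓝 0) := by
      have h2 : Tendsto (fun n : ℕ => (2⁻¹:ℝ)^n) atTop (𝓝 0) :=
        tendsto_pow_atTop_nhds_zero_of_lt_one (by norm_num) (by norm_num)
      have := ((h0.const_mul c1).add (h2.const_mul (c1 + c2)))
      simp only [mul_zero, add_zero, zero_add] at this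
      convert this using 2 with n
      ring
    have h3 := h1.eventually_lt_const hc3pos
    filter_upwards [h3] with n hn
    have hp : (0:ℝ) < 2^n := by positivity
    have : (((n:ℝ)+1) * c1 + c2) = ((((n:ℝ)+1) * c1 + c2) * (2⁻¹:ℝ)^n) * 2^n := by
      rw [mul_assoc, inv_pow, inv_mul_cancel₀ (ne_of_gt hp), mul_one]
    rw [this]
    exact le_of_lt (by exact (mul_lt_mul_of_pos_right hn hp))
  obtain ⟨N, hN⟩ := eventually_atTop.mp hkey
  -- conclude
  rw [eventually_atTop]
  refine ⟨T ^ (2^N), fun t ht => ?_⟩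
  have ht0 : (0:ℝ) < t := lt_of_lt_of_le (by positivity) ht
  set P : ℕ → Prop := fun n => T ^ (2^n) ≤ t with hP
  have hPN : P N := ht
  -- find m with ¬ P m
  obtain ⟨m, hm⟩ := pow_unbounded_of_one_lt t (one_lt_two (α := ℝ))
  have hTm : (2:ℝ) ^ m ≤ T ^ (2^m) := by
    calc (2:ℝ) ^ m ≤ (2:ℝ) ^ (2^m) :=
          pow_le_pow_right₀ one_le_two (Nat.le_of_lt (Nat.lt_two_pow_self (n := m)))
      _ ≤ T ^ (2^m) := pow_le_pow_left₀ (by norm_num) hT _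
  have hnPm : ¬ P m := by
    intro h
    exact absurd (h.trans_lt hm) (not_lt.mpr hTm)
  have hNm : N ≤ m := by
    by_contra hc
    push_neg at hc
    exact hnPm (le_trans (pow_le_pow_right₀ hT1 (Nat.pow_le_pow_right two_pos hc.le)) hPN)
  set n := Nat.findGreatest P m with hn
  have hPn : P n := Nat.findGreatest_spec hNm hPN
  have hnN : N ≤ n := Nat.le_findGreatest hNm hPN
  have hnm : n < m := lt_of_le_of_ne (Nat.findGreatest_le m) (fun h => hnPm (h ▸ hPn))
  have hnot : ¬ P (n+1) := Nat.findGreatest_is_greatest (Nat.lt_succ_self n) hnm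
  have htlt : t < T ^ (2^(n+1)) := lt_of_not_ge hnot
  -- chain of inequalities
  have step1 : ψ t ≤ ψ (T ^ (2^(n+1))) :=
    hmono (mem_Ici.mpr ht0.le) (mem_Ici.mpr (by positivity)) htlt.le
  have step2 : ψ (T ^ (2^(n+1))) ≤ C ^ (n+1) * ψ T := hiter (n+1)
  have step3 : C ^ (n+1) * ψ T ≤ T ^ (ε * 2^n) := by
    have hpos : (0:ℝ) < C ^ (n+1) * ψ T := by positivity
    have hlog : Real.log (C ^ (n+1) * ψ T) = ((n:ℝ)+1) * c1 + c2 := by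
      rw [Real.log_mul (by positivity) (by linarith), Real.log_pow]
      push_cast
      ring
    have hineq := hN n hnN
    calc C ^ (n+1) * ψ T = Real.exp (Real.log (C ^ (n+1) * ψ T)) :=
          (Real.exp_log hpos).symm
      _ ≤ Real.exp (c3 * 2^n) := Real.exp_le_exp.mpr (by rw [hlog]; exact hineq)
      _ = T ^ (ε * 2^n) := by
          rw [Real.rpow_def_of_pos hT0]
          congr 1
          rw [hc3]; ring
  have step4 : T ^ (ε * 2^n) ≤ t ^ ε := by
    have heq : T ^ (ε * 2^n) = (T ^ (2^n : ℕ)) ^ ε := by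
      rw [← Real.rpow_natCast T (2^n), ← Real.rpow_mul hT0.le]
      congr 1
      push_cast
      ring
    rw [heq]
    exact Real.rpow_le_rpow (by positivity) hPn hε.le
  linarith

theorem stmt2
    (ψ : ℝ → ℝ)
    (hmono : MonotoneOn ψ (Set.Ici 0))
    (hconc : ConcaveOn ℝ (Set.Ici 0) ψ)
    (hzero : ψ 0 = 0)
    (hnonneg : ∀ t ≥ (0:ℝ), 0 ≤ ψ t)
    (htop : Tendsto ψ atTop atTop) :
    ((∀ α > (1:ℝ), ∃ L : ℝ, Tendsto (fun t => ψ (t ^ α) / ψ t) atTop (𝓝 L)) →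
      Tendsto (fun t => ψ (t * ψ t) / ψ t) atTop (𝓝 1)) ∧
    (Tendsto (fun t => ψ (t * ψ t) / ψ t) atTop (𝓝 1) →
      ∀ a > (1:ℝ), Tendsto (fun t => ψ (a * t) / ψ t) atTop (𝓝 1)) := by
  have hev1 : ∀ᶠ t : ℝ in atTop, 1 ≤ ψ t := htop.eventually_ge_atTop 1
  constructor
  · -- Part 1
    intro h
    -- sequence of exponents α n = 2^( (1/2)^n ), decreasing to 1
    set α : ℕ → ℝ := fun n => (2:ℝ) ^ ((2⁻¹:ℝ) ^ n) with hα
    have hαgt : ∀ n, 1 < α n := fun n =>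
      (Real.one_lt_rpow_iff_of_pos (by norm_num)).mpr
        (Or.inl ⟨by norm_num, by positivity⟩)
    have hαsq : ∀ n, α (n+1) * α (n+1) = α n := by
      intro n
      rw [hα]
      simp only
      rw [← Real.rpow_add (by norm_num : (0:ℝ) < 2)]
      congr 1
      rw [pow_succ]
      ring
    -- pick the limits
    have hLex : ∀ n : ℕ, ∃ L : ℝ, Tendsto (fun t => ψ (t ^ α n) / ψ t) atTop (𝓝 L) :=
      fun n => h (α n) (hαgt n)
    choose L hL using hLex
    -- each L n ≥ 1
    have hL1 : ∀ n, 1 ≤ L n := by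
      intro n
      refine ge_of_tendsto (hL n) ?_
      filter_upwards [eventually_ge_atTop (1:ℝ), hev1] with t ht hψ
      have ht0 : (0:ℝ) ≤ t := by linarith
      have h1 : t ≤ t ^ α n := by
        nth_rewrite 1 [← Real.rpow_one t]
        exact Real.rpow_le_rpow_of_exponent_le ht (hαgt n).le
      have h2 : ψ t ≤ ψ (t ^ α n) :=
        hmono (mem_Ici.mpr ht0) (mem_Ici.mpr (by positivity)) h1
      rw [le_div_iff₀ (by linarith)]
      linarith
    -- multiplicativity: L n = L (n+1) * L (n+1)
    have hsq : ∀ n, L n = L (n+1) * L (n+1) := by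
      intro n
      set β := α (n+1) with hβ
      have hβ1 : 1 < β := hαgt (n+1)
      have hβ0 : 0 < β := by linarith
      have h1 : Tendsto (fun t => (ψ ((t^β)^β) / ψ (t^β)) * (ψ (t^β) / ψ t)) atTop
          (𝓝 (L (n+1) * L (n+1))) :=
        ((hL (n+1)).comp (tendsto_rpow_atTop hβ0)).mul (hL (n+1))
      have h2 : (fun t => (ψ ((t^β)^β) / ψ (t^β)) * (ψ (t^β) / ψ t)) =ᶠ[atTop]
          (fun t => ψ (t ^ α n) / ψ t) := by
        filter_upwards [eventually_ge_atTop (1:ℝ), hev1,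
          (htop.comp (tendsto_rpow_atTop hβ0)).eventually_ge_atTop 1] with t ht hψ hψβ
        have ht0 : (0:ℝ) ≤ t := by linarith
        have hrw : (t^β)^β = t ^ α n := by
          rw [← Real.rpow_mul ht0, hαsq n]
        have hne : ψ (t^β) ≠ 0 := by
          have : (1:ℝ) ≤ ψ (t^β) := hψβ
          linarith
        have hne2 : ψ t ≠ 0 := by linarith
        rw [hrw]
        field_simp
      exact tendsto_nhds_unique (hL n) (h1.congr' h2)
    -- closed form for L n
    have hL0pos : (0:ℝ) < L 0 := lt_of_lt_of_le one_pos (hL1 0)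
    have hpow : ∀ n, L n = (L 0) ^ ((2⁻¹:ℝ) ^ n) := by
      intro n
      induction n with
      | zero => simp
      | succ n ih =>
        have h1 : L (n+1) * L (n+1) = ((L 0) ^ ((2⁻¹:ℝ) ^ (n+1))) * ((L 0) ^ ((2⁻¹:ℝ) ^ (n+1))) := by
          rw [← hsq n, ih, ← Real.rpow_add hL0pos]
          congr 1
          rw [pow_succ]
          ring
        have h2 : (0:ℝ) ≤ L (n+1) := by linarith [hL1 (n+1)]
        have h3 : (0:ℝ) ≤ (L 0) ^ ((2⁻¹:ℝ) ^ (n+1)) := Real.rpow_nonneg hL0pos.le _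
        exact (mul_self_inj h2 h3).mp h1
    -- L n → 1
    have htendL : Tendsto L atTop (𝓝 1) := by
      have he : Tendsto (fun n : ℕ => (2⁻¹:ℝ) ^ n) atTop (𝓝 0) :=
        tendsto_pow_atTop_nhds_zero_of_lt_one (by norm_num) (by norm_num)
      have hc : ContinuousAt (fun x : ℝ => (L 0) ^ x) 0 :=
        Real.continuousAt_const_rpow (ne_of_gt hL0pos)
      have := (hc.tendsto.comp he)
      rw [Real.rpow_zero] at this
      refine this.congr fun n => ?_
      simp only [Function.comp_apply]
      exact (hpow n).symm
    -- main argument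
    rw [Metric.tendsto_nhds]
    intro ε hε
    obtain ⟨n, hn⟩ := (htendL.eventually_lt_const (by linarith : (1:ℝ) < 1 + ε)).exists
    set β := α n with hβ
    have hβ1 : 1 < β := hαgt n
    -- doubling bound from L 0 (exponent 2)
    have hα0 : α 0 = 2 := by rw [hα]; norm_num
    have hdbl0 : ∀ᶠ t : ℝ in atTop,
        ψ (t ^ (2:ℕ)) ≤ (L 0 + 1) * ψ t ∧ 1 ≤ ψ t ∧ 2 ≤ t := by
      have h1 := (hL 0).eventually_lt_const (by linarith : L 0 < L 0 + 1)
      filter_upwards [h1, hev1, eventually_ge_atTop (2:ℝ)] with t h1t h2t h3t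
      refine ⟨?_, h2t, h3t⟩
      have ht0 : (0:ℝ) ≤ t := by linarith
      have hrw : t ^ (α 0) = t ^ (2:ℕ) := by
        rw [hα0, ← Real.rpow_natCast t 2]
        norm_num
      rw [hrw] at h1t
      have := (div_lt_iff₀ (by linarith : (0:ℝ) < ψ t)).mp h1t
      linarith
    obtain ⟨T0, hT0⟩ := eventually_atTop.mp hdbl0
    set T := max T0 2 with hT
    have hTprop := hT0 T (le_max_left _ _)
    have hgrow := psi_grow ψ hmono (L 0 + 1) T (by linarith) hTprop.2.2 hTprop.2.1
      (fun t ht => (hT0 t (le_trans (le_max_left _ _) ht)).1)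
      (by linarith : (0:ℝ) < β - 1)
    -- final eventual estimate
    have h1 := (hL n).eventually_lt_const hn
    filter_upwards [h1, hev1, hgrow, eventually_ge_atTop (1:ℝ)] with t hlt hψ hgt ht
    have ht0 : (0:ℝ) < t := by linarith
    have hψ0 : (0:ℝ) < ψ t := by linarith
    -- t * ψ t ≥ t
    have hlow : t ≤ t * ψ t := le_mul_of_one_le_right ht0.le hψ
    have hr1 : ψ t ≤ ψ (t * ψ t) :=
      hmono (mem_Ici.mpr ht0.le) (mem_Ici.mpr (by positivity)) hlow
    -- t * ψ t ≤ t ^ β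
    have hup : t * ψ t ≤ t ^ β := by
      calc t * ψ t ≤ t * t ^ (β - 1) :=
            mul_le_mul_of_nonneg_left hgt ht0.le
        _ = t ^ β := by
            nth_rewrite 1 [← Real.rpow_one t]
            rw [← Real.rpow_add ht0]
            ring_nf
    have hr2 : ψ (t * ψ t) ≤ ψ (t ^ β) :=
      hmono (mem_Ici.mpr (by positivity)) (mem_Ici.mpr (by positivity)) hup
    have hr3 : ψ (t ^ β) < (1 + ε) * ψ t := (div_lt_iff₀ hψ0).mp hlt
    have hd1 : 1 ≤ ψ (t * ψ t) / ψ t := by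
      rw [le_div_iff₀ hψ0]; linarith
    have hd2 : ψ (t * ψ t) / ψ t < 1 + ε := by
      rw [div_lt_iff₀ hψ0]; linarith
    rw [Real.dist_eq, abs_lt]
    constructor <;> linarith
  · -- Part 2
    intro h a ha
    have hlow : Tendsto (fun _ : ℝ => (1:ℝ)) atTop (𝓝 1) := tendsto_const_nhds
    refine tendsto_of_tendsto_of_tendsto_of_le_of_le' hlow h ?_ ?_
    · filter_upwards [hev1, eventually_ge_atTop (0:ℝ)] with t hψ ht0
      have hψ0 : (0:ℝ) < ψ t := by linarith
      have h1 : t ≤ a * t := le_mul_of_one_le_left ht0 ha.le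
      have h2 : ψ t ≤ ψ (a * t) :=
        hmono (mem_Ici.mpr ht0) (mem_Ici.mpr (by positivity)) h1
      rw [le_div_iff₀ hψ0]
      linarith
    · filter_upwards [htop.eventually_ge_atTop a, hev1, eventually_ge_atTop (0:ℝ)]
        with t hψa hψ1 ht0
      have hψ0 : (0:ℝ) < ψ t := by linarith
      have h1 : a * t ≤ t * ψ t := by
        rw [mul_comm a t]
        exact mul_le_mul_of_nonneg_left hψa ht0
      have h2 : ψ (a * t) ≤ ψ (t * ψ t) := by
        refine hmono (mem_Ici.mpr ?_) (mem_Ici.mpr (by positivity)) h1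
        have : (0:ℝ) < a := by linarith
        positivity
      exact (div_le_div_iff_of_pos_right hψ0).mpr h2
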